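/- For every quaternion P = (p₀, p) ∈ ℝ × ℝ³ with P ≠ 0 and every vector q ∈ ℝ³, the matrix identity A(P)ᵀ · q̃ · p̃ = q̃ · p̃ + (pᵀ q)(I − A(P)ᵀ) holds, where I is the 3×3 identity matrix. -/
import Mathlib

set_option maxHeartbeats 1000000


open Matrix

/-- The skew-symmetric matrix `p̃` of `p ∈ ℝ³`, satisfying `p̃ v = p × v`. -/
def skew (p : Fin 3 → ℝ) : Matrix (Fin 3) (Fin 3) ℝ :=
  !![0, -p 2, p 1; p 2, 0, -p 0; -p 1, p 0, 0]

/-- The rotation matrix `A(P) = I + (2/‖P‖²)(p₀ p̃ + p̃²)` associated with a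
(not necessarily unit) quaternion `P = (p₀, p)`, where `‖P‖² = p₀² + ‖p‖²`. -/
noncomputable def quatA (p0 : ℝ) (p : Fin 3 → ℝ) : Matrix (Fin 3) (Fin 3) ℝ :=
  1 + (2 / (p0 ^ 2 + p ⬝ᵥ p)) • (p0 • skew p + skew p * skew p)

/-- For every nonzero quaternion `P = (p₀, p)` and every `q ∈ ℝ³`:
`A(P)ᵀ q̃ p̃ = q̃ p̃ + (pᵀq)(I − A(P)ᵀ)`. -/
theorem quatA_transpose_mul_skew_mul_skew (p0 : ℝ) (p : Fin 3 → ℝ) (hP : (p0, p) ≠ 0)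
    (q : Fin 3 → ℝ) :
    (quatA p0 p)ᵀ * skew q * skew p =
      skew q * skew p + (p ⬝ᵥ q) • ((1 : Matrix (Fin 3) (Fin 3) ℝ) - (quatA p0 p)ᵀ) := by
  have hd : p0 ^ 2 + p ⬝ᵥ p ≠ 0 := by
    have h0 : p0 ≠ 0 ∨ p ≠ 0 := by
      by_contra h
      push_neg at h
      exact hP (Prod.ext h.1 h.2)
    have hfun : p ≠ 0 → p 0 ^ 2 + p 1 ^ 2 + p 2 ^ 2 ≠ 0 := by
      intro hp h
      obtain ⟨i, hi⟩ := Function.ne_iff.mp hp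
      simp only [Pi.zero_apply] at hi
      fin_cases i <;> simp only [Fin.isValue, Fin.zero_eta, Fin.mk_one, Fin.reduceFinMk] at hi <;>
        nlinarith [sq_nonneg (p 0), sq_nonneg (p 1), sq_nonneg (p 2), sq_pos_of_ne_zero hi]
    simp only [dotProduct, Fin.sum_univ_three]
    rcases h0 with h | h
    · nlinarith [sq_nonneg (p 0), sq_nonneg (p 1), sq_nonneg (p 2), sq_pos_of_ne_zero h]
    · have h1 := hfun h
      have h2 : 0 < p 0 ^ 2 + p 1 ^ 2 + p 2 ^ 2 :=
        lt_of_le_of_ne (by positivity) (Ne.symm h1)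
      nlinarith [sq_nonneg p0]
  ext i j
  fin_cases i <;> fin_cases j <;>
    · simp [quatA, skew, Matrix.one_fin_three, Matrix.mul_apply, Fin.sum_univ_three,
        dotProduct, Matrix.vecHead, Matrix.vecTail]
      field_simp
      ring
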